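/- For the power-law breakage kernel β_ν with ν ∈ (-1,0], for every m > 1 and all x,y > 0, ∫₀^{x+y} z^m β_ν(z,x,y) dz = ((ν+2)/(m+ν+1)) (x+y)^m ≤ (1 - κ_m)(x^m + y^m) + ς_m (x y^{m-1} + y x^{m-1}), where κ_m = (m-1)/(m+ν+1) and ς_m = C_m(ν+2)/(m+ν+1), with C_m = 2^{m-1} - 1 for m ∈ (1,2] ∪ [3,∞) and C_m = m for m ∈ (2,3). -/

import Mathlib

open Real MeasureTheory Set

/-- The constant `C_m`: `2^(m-1) - 1` for `m ∈ (1,2] ∪ [3,∞)` and `m` for `m ∈ (2,3)`. -/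
noncomputable def Cm (m : ℝ) : ℝ := if m ≤ 2 ∨ 3 ≤ m then 2 ^ (m - 1) - 1 else m

-- Bernoulli for nonpositive exponent
lemma bern_nonpos {s p : ℝ} (hs : 0 ≤ s) (hp : p ≤ 0) : 1 + p * s ≤ (1 + s) ^ p := by
  rcases le_or_gt (1 + p * s) 0 with h | h
  · exact h.trans (rpow_pos_of_pos (by linarith) p).le
  · have key : MonotoneOn (fun s : ℝ => (1 + s) ^ p - 1 - p * s) (Ici 0) := by
      have hderiv : ∀ t ∈ interior (Ici (0:ℝ)), HasDerivAt (fun s : ℝ => (1 + s) ^ p - 1 - p * s)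
          (1 * p * (1 + t) ^ (p - 1) - p) t := by
        intro t ht
        simp only [interior_Ici, mem_Ioi] at ht
        have h1 : HasDerivAt (fun s : ℝ => (1 + s)) 1 t := by
          simpa using (hasDerivAt_id t).const_add 1
        have h2 : HasDerivAt (fun s : ℝ => (1 + s) ^ p) (1 * p * (1 + t) ^ (p - 1)) t :=
          h1.rpow_const (Or.inl (by positivity))
        exact ((h2.sub_const 1).sub ((hasDerivAt_id t).const_mul p)).congr_deriv (by ring)
      apply monotoneOn_of_deriv_nonneg (convex_Ici 0)
      · exact ContinuousOn.sub (ContinuousOn.sub (by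
          apply ContinuousOn.rpow_const (by fun_prop)
          intro t ht
          exact Or.inl (by simp only [mem_Ici] at ht; positivity)) (by fun_prop)) (by fun_prop)
      · intro t ht
        exact (hderiv t ht).differentiableAt.differentiableWithinAt
      · intro t ht
        rw [(hderiv t ht).deriv]
        simp only [interior_Ici, mem_Ioi] at ht
        have : (1 + t) ^ (p - 1) ≤ 1 :=
          rpow_le_one_of_one_le_of_nonpos (by linarith) (by linarith)
        nlinarith [rpow_pos_of_pos (show (0:ℝ) < 1 + t by linarith) (p-1)]
    have h2 := key (mem_Ici.2 le_rfl) (mem_Ici.2 hs) hs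
    simp only [add_zero, Real.one_rpow, mul_zero] at h2
    linarith

section
variable {m : ℝ}

-- derivative helpers
lemma hd_main (C : ℝ) (hm : 1 < m) {s : ℝ} (hs : 0 < s) :
    HasDerivAt (fun t : ℝ => 1 + t^m + C*t + C*t^(m-1) - (1+t)^m)
      (m*s^(m-1) + C + C*(m-1)*s^(m-2) - m*(1+s)^(m-1)) s := by
  have h1 : HasDerivAt (fun t : ℝ => t ^ m) (m * s^(m-1)) s := by
    simpa using Real.hasDerivAt_rpow_const (p := m) (Or.inl hs.ne')
  have h2 : HasDerivAt (fun t : ℝ => t ^ (m-1)) ((m-1) * s^(m-1-1)) s := by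
    simpa using Real.hasDerivAt_rpow_const (p := m-1) (Or.inl hs.ne')
  have h3 : HasDerivAt (fun t : ℝ => (1+t)) 1 s := by
    simpa using (hasDerivAt_id s).const_add 1
  have h4 : HasDerivAt (fun t : ℝ => (1+t) ^ m) (1 * m * (1+s)^(m-1)) s :=
    h3.rpow_const (Or.inl (by positivity))
  have := ((((h1.const_add 1).add ((hasDerivAt_id s).const_mul C)).add
      (h2.const_mul C)).sub h4)
  refine this.congr_deriv ?_
  rw [show m - 1 - 1 = m - 2 by ring]
  ring

lemma hd_P (C : ℝ) (hm : 1 < m) {s : ℝ} (hs : 0 < s) :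
    HasDerivAt (fun t : ℝ => m*t^(m-1) + C + C*(m-1)*t^(m-2) - m*(1+t)^(m-1))
      (m*(m-1)*s^(m-2) + C*(m-1)*(m-2)*s^(m-3) - m*(m-1)*(1+s)^(m-2)) s := by
  have h1 : HasDerivAt (fun t : ℝ => t ^ (m-1)) ((m-1) * s^(m-1-1)) s := by
    simpa using Real.hasDerivAt_rpow_const (p := m-1) (Or.inl hs.ne')
  have h2 : HasDerivAt (fun t : ℝ => t ^ (m-2)) ((m-2) * s^(m-2-1)) s := by
    simpa using Real.hasDerivAt_rpow_const (p := m-2) (Or.inl hs.ne')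
  have h3 : HasDerivAt (fun t : ℝ => (1+t)) 1 s := by
    simpa using (hasDerivAt_id s).const_add 1
  have h4 : HasDerivAt (fun t : ℝ => (1+t) ^ (m-1)) (1 * (m-1) * (1+s)^(m-1-1)) s :=
    h3.rpow_const (Or.inl (by positivity))
  have := (((h1.const_mul m).add_const C).add (h2.const_mul (C*(m-1)))).sub (h4.const_mul m)
  refine this.congr_deriv ?_
  rw [show m - 1 - 1 = m - 2 by ring, show m - 2 - 1 = m - 3 by ring]
  ring

lemma hd_psi (C : ℝ) (hm : 1 < m) {s : ℝ} (hs : 0 < s) :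
    HasDerivAt (fun t : ℝ => m*t + C*(m-2) - m * (t^(3-m) * (1+t)^(m-2)))
      (m - m * ((3-m)*s^(2-m)*(1+s)^(m-2) + (m-2)*s^(3-m)*(1+s)^(m-3))) s := by
  have h1 : HasDerivAt (fun t : ℝ => t ^ (3-m)) ((3-m) * s^(3-m-1)) s := by
    simpa using Real.hasDerivAt_rpow_const (p := 3-m) (Or.inl hs.ne')
  have h3 : HasDerivAt (fun t : ℝ => (1+t)) 1 s := by
    simpa using (hasDerivAt_id s).const_add 1
  have h4 : HasDerivAt (fun t : ℝ => (1+t) ^ (m-2)) (1 * (m-2) * (1+s)^(m-2-1)) s :=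
    h3.rpow_const (Or.inl (by positivity))
  have h5 := h1.mul h4
  have := (((hasDerivAt_id s).const_mul m).add_const (C*(m-2))).sub (h5.const_mul m)
  refine this.congr_deriv ?_
  rw [show (3:ℝ) - m - 1 = 2 - m by ring, show m - 2 - 1 = m - 3 by ring]
  ring

end

section
variable {m : ℝ}

-- the key pointwise bound:  s^(2-m) (1+s)^(m-3) (3-m+s) ≤ 1
lemma key_bound (hm : 1 < m) (hcase : m ≤ 2 ∨ 3 ≤ m) {s : ℝ} (hs : 0 < s) :
    (3-m)*s^(2-m)*(1+s)^(m-2) + (m-2)*s^(3-m)*(1+s)^(m-3) ≤ 1 := by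
  have h1s : (0:ℝ) < 1 + s := by linarith
  have e3 : s^(3-m) = s^(2-m) * s := by
    rw [← Real.rpow_add_one hs.ne' (2-m), show 2-m+1 = 3-m by ring]
  have e4 : (1+s)^(m-2) = (1+s)^(m-3) * (1+s) := by
    rw [← Real.rpow_add_one h1s.ne' (m-3), show m-3+1 = m-2 by ring]
  have lhs_eq : (3-m)*s^(2-m)*(1+s)^(m-2) + (m-2)*s^(3-m)*(1+s)^(m-3)
      = s^(2-m) * (1+s)^(m-3) * (3-m+s) := by
    rw [e3, e4]; ring
  rw [lhs_eq]
  rcases le_or_gt (3-m+s) 0 with hneg | hpos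
  · have : s^(2-m) * (1+s)^(m-3) * (3-m+s) ≤ 0 := by
      apply mul_nonpos_of_nonneg_of_nonpos _ hneg
      positivity
    linarith
  · -- Bernoulli:  (1 + s⁻¹)^(3-m) ≥ 1 + (3-m) s⁻¹
    have hsi : (0:ℝ) ≤ s⁻¹ := by positivity
    have bern : 1 + (3-m) * s⁻¹ ≤ (1 + s⁻¹) ^ (3-m) := by
      rcases hcase with h2 | h3
      · exact one_add_mul_self_le_rpow_one_add (by linarith) (by linarith)
      · exact bern_nonpos hsi (by linarith)
    have e5 : (1 + s⁻¹ : ℝ) = (1+s)/s := by field_simp; ring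
    have e6 : ((1+s)/s) ^ (3-m) = (1+s)^(3-m) / s^(3-m) :=
      Real.div_rpow h1s.le hs.le _
    have key : 3 - m + s ≤ s^(m-2) * (1+s)^(3-m) := by
      have h7 : s * (1 + (3-m) * s⁻¹) ≤ s * ((1+s)^(3-m) / s^(3-m)) := by
        rw [← e6, ← e5]
        exact mul_le_mul_of_nonneg_left bern hs.le
      have e8 : s * (1 + (3-m) * s⁻¹) = 3 - m + s := by field_simp; ring
      have e9 : s * ((1+s)^(3-m) / s^(3-m)) = s^(m-2) * (1+s)^(3-m) := by
        rw [show s * ((1+s)^(3-m) / s^(3-m)) = s / s^(3-m) * (1+s)^(3-m) by ring]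
        congr 1
        rw [show m-2 = 1-(3-m) by ring, Real.rpow_sub hs 1 (3-m), Real.rpow_one]
      rw [e8, e9] at h7
      exact h7
    have hpos2 : (0:ℝ) < s^(m-2) * (1+s)^(3-m) := by positivity
    have e10 : s^(2-m) * (1+s)^(m-3) = (s^(m-2) * (1+s)^(3-m))⁻¹ := by
      rw [mul_inv, ← Real.rpow_neg hs.le, ← Real.rpow_neg h1s.le,
        show -(m-2) = 2-m by ring, show -(3-m) = m-3 by ring]
    rw [e10, inv_mul_eq_div, div_le_one hpos2]
    linarith [key]
end

section
variable {m : ℝ}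

lemma psi_mono (C : ℝ) (hm : 1 < m) (hcase : m ≤ 2 ∨ 3 ≤ m) :
    MonotoneOn (fun t : ℝ => m*t + C*(m-2) - m * (t^(3-m) * (1+t)^(m-2))) (Ioi 0) := by
  apply monotoneOn_of_deriv_nonneg (convex_Ioi 0)
  · intro s hs
    exact (hd_psi C hm hs).continuousAt.continuousWithinAt
  · intro s hs
    rw [interior_Ioi] at hs
    exact (hd_psi C hm hs).differentiableAt.differentiableWithinAt
  · intro s hs
    rw [interior_Ioi] at hs
    rw [(hd_psi C hm hs).deriv]
    have := key_bound hm hcase hs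
    nlinarith
end

noncomputable def Gf (m C t : ℝ) : ℝ := 1 + t^m + C*t + C*t^(m-1) - (1+t)^m
noncomputable def Pf (m C t : ℝ) : ℝ := m*t^(m-1) + C + C*(m-1)*t^(m-2) - m*(1+t)^(m-1)
noncomputable def psif (m C t : ℝ) : ℝ := m*t + C*(m-2) - m * (t^(3-m) * (1+t)^(m-2))

section
variable {m : ℝ}

lemma hGf (C : ℝ) (hm : 1 < m) {s : ℝ} (hs : 0 < s) :
    HasDerivAt (Gf m C) (Pf m C s) s := hd_main C hm hs

lemma hPf (C : ℝ) (hm : 1 < m) {s : ℝ} (hs : 0 < s) :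
    HasDerivAt (Pf m C) ((m-1) * s^(m-3) * psif m C s) s := by
  have e1 : s^(m-3) * s = s^(m-2) := by
    rw [← Real.rpow_add_one hs.ne' (m-3), show m-3+1 = m-2 by ring]
  have e2 : s^(m-3) * s^(3-m) = 1 := by
    rw [← Real.rpow_add hs, show (m-3)+(3-m) = (0:ℝ) by ring, Real.rpow_zero]
  have Qeq : m*(m-1)*s^(m-2) + (C)*(m-1)*(m-2)*s^(m-3) - m*(m-1)*(1+s)^(m-2)
      = (m-1) * s^(m-3) * psif m C s := by
    unfold psif
    linear_combination (-(m*(m-1)))*e1 + (m*(m-1)*(1+s)^(m-2))*e2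
  rw [← Qeq]
  exact hd_P C hm hs

lemma psif_mono (C : ℝ) (hm : 1 < m) (hcase : m ≤ 2 ∨ 3 ≤ m) :
    MonotoneOn (psif m C) (Ioi 0) := psi_mono C hm hcase

lemma Gf_cont (C : ℝ) (hm : 1 < m) : ContinuousOn (Gf m C) (Ici 0) := by
  unfold Gf
  apply ContinuousOn.sub
  · apply ContinuousOn.add
    apply ContinuousOn.add
    apply ContinuousOn.add
    · fun_prop
    · intro s hs
      exact (Real.continuousAt_rpow_const s m (Or.inr (by linarith))).continuousWithinAt
    · fun_prop
    · apply ContinuousOn.mul continuousOn_const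
      intro s hs
      exact (Real.continuousAt_rpow_const s (m-1) (Or.inr (by linarith))).continuousWithinAt
  · apply ContinuousOn.rpow_const (by fun_prop)
    intro s hs
    simp only [mem_Ici] at hs
    exact Or.inl (by positivity)

lemma Gf_zero (C : ℝ) (hm : 1 < m) : Gf m C 0 = 0 := by
  unfold Gf
  rw [Real.zero_rpow (by linarith : m ≠ 0), Real.zero_rpow (by linarith : m - 1 ≠ 0)]
  norm_num

lemma Gf_one (hm : 1 < m) : Gf m ((2:ℝ)^(m-1) - 1) 1 = 0 := by
  unfold Gf
  have h2m : ((1:ℝ)+1)^m = 2^(m-1) * 2 := by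
    rw [show (1:ℝ)+1 = 2 by norm_num, ← Real.rpow_add_one (by norm_num) (m-1),
      show m-1+1 = m by ring]
  rw [h2m, Real.one_rpow, Real.one_rpow]
  ring

lemma Pf_one (hm : 1 < m) : Pf m ((2:ℝ)^(m-1) - 1) 1 = 0 := by
  unfold Pf
  rw [show (1:ℝ)+1 = 2 by norm_num, Real.one_rpow, Real.one_rpow]
  ring
end

section
variable {m : ℝ}

lemma Gf_nonneg (hm : 1 < m) (hcase : m ≤ 2 ∨ 3 ≤ m) {t : ℝ} (ht : 0 < t) (ht1 : t ≤ 1) :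
    0 ≤ Gf m ((2:ℝ)^(m-1) - 1) t := by
  set C := (2:ℝ)^(m-1) - 1 with hC
  have hPcont : ContinuousOn (Pf m C) (Ioi 0) := fun s hs =>
    ((hPf C hm hs).continuousAt).continuousWithinAt
  by_cases hall : ∀ s ∈ Ioo 0 t, 0 ≤ Pf m C s
  · have mono : MonotoneOn (Gf m C) (Icc 0 t) := by
      apply monotoneOn_of_deriv_nonneg (convex_Icc 0 t)
        ((Gf_cont C hm).mono (Icc_subset_Ici_self))
      · intro s hs
        rw [interior_Icc] at hs
        exact (hGf C hm hs.1).differentiableAt.differentiableWithinAt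
      · intro s hs
        rw [interior_Icc] at hs
        rw [(hGf C hm hs.1).deriv]
        exact hall s hs
    have h := mono (left_mem_Icc.2 ht.le) (right_mem_Icc.2 ht.le) ht.le
    rwa [Gf_zero C hm] at h
  · push_neg at hall
    obtain ⟨s₀, hs₀m, hs₀⟩ := hall
    have hs₀0 : 0 < s₀ := hs₀m.1
    have hs₀t : s₀ < t := hs₀m.2
    have hs₀1 : s₀ ≤ 1 := hs₀t.le.trans ht1
    have hPle : ∀ u ∈ Icc s₀ (1:ℝ), Pf m C u ≤ 0 := by
      intro u hu
      have hu0 : 0 < u := lt_of_lt_of_le hs₀0 hu.1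
      by_cases hpsu : psif m C u ≤ 0
      · have anti : AntitoneOn (Pf m C) (Icc s₀ u) := by
          apply antitoneOn_of_deriv_nonpos (convex_Icc _ _)
            (hPcont.mono (fun z hz => lt_of_lt_of_le hs₀0 hz.1))
          · intro z hz
            rw [interior_Icc] at hz
            exact (hPf C hm (hs₀0.trans hz.1)).differentiableAt.differentiableWithinAt
          · intro z hz
            rw [interior_Icc] at hz
            have hz0 : 0 < z := hs₀0.trans hz.1
            rw [(hPf C hm hz0).deriv]
            have hzu : psif m C z ≤ psif m C u :=
              psif_mono C hm hcase (mem_Ioi.2 hz0) (mem_Ioi.2 hu0) hz.2.le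
            have hpow : 0 ≤ (m-1) * z^(m-3) :=
              mul_nonneg (by linarith) (Real.rpow_pos_of_pos hz0 (m-3)).le
            exact mul_nonpos_of_nonneg_of_nonpos hpow (hzu.trans hpsu)
        have h := anti (left_mem_Icc.2 hu.1) (right_mem_Icc.2 hu.1) hu.1
        linarith
      · push_neg at hpsu
        have mono2 : MonotoneOn (Pf m C) (Icc u 1) := by
          apply monotoneOn_of_deriv_nonneg (convex_Icc _ _)
            (hPcont.mono (fun z hz => lt_of_lt_of_le hu0 hz.1))
          · intro z hz
            rw [interior_Icc] at hz
            exact (hPf C hm (hu0.trans hz.1)).differentiableAt.differentiableWithinAt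
          · intro z hz
            rw [interior_Icc] at hz
            have hz0 : 0 < z := hu0.trans hz.1
            rw [(hPf C hm hz0).deriv]
            have hzu : psif m C u ≤ psif m C z :=
              psif_mono C hm hcase (mem_Ioi.2 hu0) (mem_Ioi.2 hz0) hz.1.le
            have hpow : 0 ≤ (m-1) * z^(m-3) :=
              mul_nonneg (by linarith) (Real.rpow_pos_of_pos hz0 (m-3)).le
            nlinarith
        have h := mono2 (left_mem_Icc.2 hu.2) (right_mem_Icc.2 hu.2) hu.2
        rw [Pf_one hm] at h
        exact h
    have anti2 : AntitoneOn (Gf m C) (Icc s₀ 1) := by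
      apply antitoneOn_of_deriv_nonpos (convex_Icc _ _)
        ((Gf_cont C hm).mono (fun z hz => le_trans hs₀0.le hz.1))
      · intro z hz
        rw [interior_Icc] at hz
        exact (hGf C hm (hs₀0.trans hz.1)).differentiableAt.differentiableWithinAt
      · intro z hz
        rw [interior_Icc] at hz
        rw [(hGf C hm (hs₀0.trans hz.1)).deriv]
        exact hPle z ⟨hz.1.le, hz.2.le⟩
    have h := anti2 (mem_Icc.2 ⟨hs₀t.le, ht1⟩) (mem_Icc.2 ⟨hs₀1, le_refl 1⟩) ht1
    rw [Gf_one hm] at h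
    exact h

-- the t-form inequality, union case
lemma T_union (hm : 1 < m) (hcase : m ≤ 2 ∨ 3 ≤ m) {t : ℝ} (ht : 0 < t) (ht1 : t ≤ 1) :
    (1+t)^m ≤ 1 + t^m + ((2:ℝ)^(m-1) - 1) * (t + t^(m-1)) := by
  have h := Gf_nonneg hm hcase ht ht1
  unfold Gf at h
  nlinarith [h]
end

lemma T_mid {m : ℝ} (hm2 : 2 < m) (hm3 : m < 3) {t : ℝ} (ht : 0 < t) (ht1 : t ≤ 1) :
    (1+t)^m ≤ 1 + t^m + m * (t + t^(m-1)) := by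
  have h1t : (0:ℝ) < 1 + t := by linarith
  have step1 : (1+t)^(m-2) ≤ 1 + (m-2)*t :=
    rpow_one_add_le_one_add_mul_self (by linarith) (by linarith) (by linarith)
  have step2 : (1+t)^m = (1+t)^(2:ℝ) * (1+t)^(m-2) := by
    rw [← Real.rpow_add h1t]
    congr 1
    ring
  have e2 : (1+t)^(2:ℝ) = (1+t)^(2:ℕ) := by
    rw [← Real.rpow_natCast (1+t) 2]
    norm_num
  have tp2 : t^(2:ℝ) ≤ t^(m-1) :=
    Real.rpow_le_rpow_of_exponent_ge ht ht1 (by linarith)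
  have tp3 : t^(3:ℝ) ≤ t^m :=
    Real.rpow_le_rpow_of_exponent_ge ht ht1 (by linarith)
  have et2 : t^(2:ℝ) = t^(2:ℕ) := by rw [← Real.rpow_natCast t 2]; norm_num
  have et3 : t^(3:ℝ) = t^(3:ℕ) := by rw [← Real.rpow_natCast t 3]; norm_num
  have bound : (1+t)^m ≤ (1+t)^(2:ℕ) * (1 + (m-2)*t) := by
    rw [step2, e2]
    exact mul_le_mul_of_nonneg_left step1 (by positivity)
  have expand : (1+t)^(2:ℕ) * (1 + (m-2)*t) = 1 + m*t + (2*m-3)*t^(2:ℕ) + (m-2)*t^(3:ℕ) := by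
    ring
  rw [expand] at bound
  rw [et2] at tp2
  rw [et3] at tp3
  have h2 : (0:ℝ) ≤ t^(2:ℕ) := by positivity
  have h3 : (0:ℝ) ≤ t^(3:ℕ) := by positivity
  have hm1 : (0:ℝ) ≤ t^(m-1) := (Real.rpow_pos_of_pos ht _).le
  nlinarith [bound, tp2, tp3]

lemma T_all {m : ℝ} (hm : 1 < m) {t : ℝ} (ht : 0 < t) (ht1 : t ≤ 1) :
    (1+t)^m ≤ 1 + t^m + Cm m * (t + t^(m-1)) := by
  by_cases hc : m ≤ 2 ∨ 3 ≤ m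
  · rw [Cm, if_pos hc]
    exact T_union hm hc ht ht1
  · rw [Cm, if_neg hc]
    push_neg at hc
    exact T_mid hc.1 hc.2 ht ht1

lemma key_asym {m x y : ℝ} (hm : 1 < m) (hx : 0 < x) (hy : 0 < y) (hyx : y ≤ x) :
    (x+y)^m ≤ x^m + y^m + Cm m * (x*y^(m-1) + y*x^(m-1)) := by
  have ht : 0 < y/x := div_pos hy hx
  have ht1 : y/x ≤ 1 := (div_le_one hx).2 hyx
  have hT := T_all hm ht ht1
  have hxm : (0:ℝ) < x^m := Real.rpow_pos_of_pos hx m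
  have ex : x^m = x^(m-1) * x := by
    rw [← Real.rpow_add_one hx.ne' (m-1), show m-1+1 = m by ring]
  have hx1 : (0:ℝ) < x^(m-1) := Real.rpow_pos_of_pos hx _
  have A1 : x^m * (1+y/x)^m = (x+y)^m := by
    rw [← Real.mul_rpow hx.le (by positivity)]
    congr 1
    field_simp
  have A2 : x^m * (y/x)^m = y^m := by
    rw [← Real.mul_rpow hx.le (by positivity)]
    congr 1
    field_simp
  have A3 : x^m * (y/x) = y * x^(m-1) := by
    rw [ex]; field_simp
  have A4 : x^m * (y/x)^(m-1) = x * y^(m-1) := by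
    rw [Real.div_rpow hy.le hx.le, ex]
    field_simp
  calc (x+y)^m = x^m * (1+y/x)^m := A1.symm
    _ ≤ x^m * (1 + (y/x)^m + Cm m * (y/x + (y/x)^(m-1))) :=
        mul_le_mul_of_nonneg_left hT hxm.le
    _ = x^m + y^m + Cm m * (x*y^(m-1) + y*x^(m-1)) := by
        linear_combination A2 + Cm m * A3 + Cm m * A4

lemma key_xy {m x y : ℝ} (hm : 1 < m) (hx : 0 < x) (hy : 0 < y) :
    (x+y)^m ≤ x^m + y^m + Cm m * (x*y^(m-1) + y*x^(m-1)) := by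
  rcases le_total y x with h | h
  · exact key_asym hm hx hy h
  · have h2 := key_asym hm hy hx h
    rw [add_comm y x] at h2
    have e : Cm m * (y*x^(m-1) + x*y^(m-1)) = Cm m * (x*y^(m-1) + y*x^(m-1)) := by ring
    linarith

lemma integral_part {ν m S : ℝ} (hν₁ : -1 < ν) (hm : 1 < m) (hS : 0 < S) :
    (∫ z in Ioo (0:ℝ) S, z ^ m * ((ν + 2) * z ^ ν * S ^ (-(ν + 1))))
      = (ν + 2) / (m + ν + 1) * S ^ m := by
  have hmn : (0:ℝ) < m + ν := by linarith
  have step1 : (∫ z in Ioo (0:ℝ) S, z ^ m * ((ν + 2) * z ^ ν * S ^ (-(ν + 1))))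
      = ∫ z in Ioo (0:ℝ) S, (ν + 2) * S ^ (-(ν + 1)) * z ^ (m + ν) := by
    apply MeasureTheory.setIntegral_congr_fun measurableSet_Ioo
    intro z hz
    dsimp only
    rw [Real.rpow_add hz.1 m ν]
    ring
  rw [step1, MeasureTheory.integral_const_mul]
  have step2 : (∫ z in Ioo (0:ℝ) S, z ^ (m + ν)) = S ^ (m + ν + 1) / (m + ν + 1) := by
    rw [← MeasureTheory.integral_Ioc_eq_integral_Ioo,
      ← intervalIntegral.integral_of_le hS.le,
      integral_rpow (Or.inl (by linarith)),
      Real.zero_rpow (by linarith : m + ν + 1 ≠ 0)]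
    ring
  rw [step2]
  rw [show (ν+2) * S^(-(ν+1)) * (S^(m+ν+1)/(m+ν+1)) =
    (ν+2)/(m+ν+1) * (S^(-(ν+1)) * S^(m+ν+1)) by ring, ← Real.rpow_add hS]
  congr 2
  ring

theorem powerlaw_superlinear_moment (ν m : ℝ) (hν₁ : -1 < ν) (hν₂ : ν ≤ 0) (hm : 1 < m)
    (x y : ℝ) (hx : 0 < x) (hy : 0 < y) :
    (∫ z in Ioo (0:ℝ) (x + y), z ^ m * ((ν + 2) * z ^ ν * (x + y) ^ (-(ν + 1))))
      = (ν + 2) / (m + ν + 1) * (x + y) ^ m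
    ∧ (ν + 2) / (m + ν + 1) * (x + y) ^ m
      ≤ (1 - (m - 1) / (m + ν + 1)) * (x ^ m + y ^ m)
        + Cm m * (ν + 2) / (m + ν + 1) * (x * y ^ (m - 1) + y * x ^ (m - 1)) := by
  have hS : 0 < x + y := by linarith
  have hden : (0:ℝ) < m + ν + 1 := by linarith
  constructor
  · exact integral_part hν₁ hm hS
  · have hkey := key_xy hm hx hy
    have e1 : 1 - (m-1)/(m+ν+1) = (ν+2)/(m+ν+1) := by
      field_simp
      ring
    rw [e1]
    have hc : (0:ℝ) ≤ (ν+2)/(m+ν+1) := by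
      apply div_nonneg <;> linarith
    have h2 := mul_le_mul_of_nonneg_left hkey hc
    have e2 : (ν+2)/(m+ν+1)*(x^m+y^m+Cm m*(x*y^(m-1)+y*x^(m-1)))
        = (ν+2)/(m+ν+1)*(x^m+y^m)
          + Cm m*(ν+2)/(m+ν+1)*(x*y^(m-1)+y*x^(m-1)) := by ring
    linarith
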